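/- The formal power series S(x) = Σ_{n≥0} s(n)·x^n over ℤ, where s(n) = a(n) − b(n) is the difference of even and odd Motzkin path counts, satisfies the functional equation S(x) = 1 + x·S(x) − x²·S(x)². -/

import Mathlib

inductive MStep where
  | U : MStep
  | D : MStep
  | H : MStep
deriving DecidableEq

/-- A word in {U,D,H} is a Motzkin path if #U = #D and no prefix has more D's than U's. -/
def IsMotzkin (w : List MStep) : Prop :=
  w.count MStep.U = w.count MStep.D ∧
  ∀ p : List MStep, p <+: w → p.count MStep.D ≤ p.count MStep.U

/-- Number of Motzkin paths of length n (the n-th Motzkin number). -/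
noncomputable def motzkinNum (n : ℕ) : ℕ :=
  Nat.card {w : List MStep // w.length = n ∧ IsMotzkin w}

/-- Number of Motzkin paths of length n with an even number of U steps. -/
noncomputable def evenMotzkin (n : ℕ) : ℕ :=
  Nat.card {w : List MStep // w.length = n ∧ IsMotzkin w ∧ Even (w.count MStep.U)}

/-- Number of Motzkin paths of length n with an odd number of U steps. -/
noncomputable def oddMotzkin (n : ℕ) : ℕ :=
  Nat.card {w : List MStep // w.length = n ∧ IsMotzkin w ∧ Odd (w.count MStep.U)}

/-- The shadow of the n-th Motzkin number: s(n) = a(n) - b(n). -/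
noncomputable def shadow (n : ℕ) : ℤ :=
  (evenMotzkin n : ℤ) - (oddMotzkin n : ℤ)

/-! ### Auxiliary development -/

namespace MotzkinAux

instance : Fintype MStep :=
  ⟨{MStep.U, MStep.D, MStep.H}, fun x => by cases x <;> simp⟩

instance : DecidablePred IsMotzkin := fun w =>
  decidable_of_iff
    (w.count MStep.U = w.count MStep.D ∧
      ∀ p ∈ w.inits, p.count MStep.D ≤ p.count MStep.U)
    (by simp [IsMotzkin, List.mem_inits])

@[simp] lemma cU_cons_U (t : List MStep) :
    (MStep.U :: t).count MStep.U = t.count MStep.U + 1 := by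
  simp [List.count_cons]

@[simp] lemma cU_cons_D (t : List MStep) :
    (MStep.D :: t).count MStep.U = t.count MStep.U := by
  simp [List.count_cons]

@[simp] lemma cU_cons_H (t : List MStep) :
    (MStep.H :: t).count MStep.U = t.count MStep.U := by
  simp [List.count_cons]

@[simp] lemma cD_cons_U (t : List MStep) :
    (MStep.U :: t).count MStep.D = t.count MStep.D := by
  simp [List.count_cons]

@[simp] lemma cD_cons_D (t : List MStep) :
    (MStep.D :: t).count MStep.D = t.count MStep.D + 1 := by
  simp [List.count_cons]

@[simp] lemma cD_cons_H (t : List MStep) :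
    (MStep.H :: t).count MStep.D = t.count MStep.D := by
  simp [List.count_cons]

/-- All lists of a given length, as a finset. -/
def allLists : ℕ → Finset (List MStep)
  | 0 => {[]}
  | n + 1 => Finset.image₂ List.cons Finset.univ (allLists n)

lemma mem_allLists : ∀ (n : ℕ) (w : List MStep), w ∈ allLists n ↔ w.length = n
  | 0, w => by cases w <;> simp [allLists]
  | n + 1, w => by
    cases w with
    | nil => simp [allLists, Finset.mem_image₂]
    | cons a t =>
      simp only [allLists, Finset.mem_image₂, Finset.mem_univ, true_and,
        List.length_cons, Nat.add_left_inj]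
      constructor
      · rintro ⟨b, u, hu, h⟩
        injection h with h1 h2
        subst h1; subst h2
        exact (mem_allLists n _).1 hu
      · intro h
        exact ⟨a, t, (mem_allLists n t).2 h, rfl⟩

/-- Motzkin paths of length `n`, as a finset. -/
def motz (n : ℕ) : Finset (List MStep) := (allLists n).filter IsMotzkin

lemma mem_motz {n : ℕ} {w : List MStep} :
    w ∈ motz n ↔ w.length = n ∧ IsMotzkin w := by
  simp [motz, Finset.mem_filter, mem_allLists]

/-- The signed count. -/
def g (n : ℕ) : ℤ := ∑ w ∈ motz n, (-1 : ℤ) ^ (w.count MStep.U)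

lemma evenMotzkin_eq (n : ℕ) :
    evenMotzkin n = ((motz n).filter (fun w => Even (w.count MStep.U))).card := by
  have e : {w : List MStep // w.length = n ∧ IsMotzkin w ∧ Even (w.count MStep.U)} ≃
      {w : List MStep // w ∈ (motz n).filter (fun w => Even (w.count MStep.U))} :=
    Equiv.subtypeEquivRight (by
      intro w
      simp [mem_motz, Finset.mem_filter, and_assoc])
  rw [evenMotzkin, Nat.card_congr e, Nat.card_eq_fintype_card, Fintype.card_coe]

lemma oddMotzkin_eq (n : ℕ) :
    oddMotzkin n = ((motz n).filter (fun w => ¬ Even (w.count MStep.U))).card := by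
  have e : {w : List MStep // w.length = n ∧ IsMotzkin w ∧ Odd (w.count MStep.U)} ≃
      {w : List MStep // w ∈ (motz n).filter (fun w => ¬ Even (w.count MStep.U))} :=
    Equiv.subtypeEquivRight (by
      intro w
      simp [mem_motz, Finset.mem_filter, and_assoc, Nat.not_even_iff_odd])
  rw [oddMotzkin, Nat.card_congr e, Nat.card_eq_fintype_card, Fintype.card_coe]

lemma shadow_eq_g (n : ℕ) : shadow n = g n := by
  rw [shadow, evenMotzkin_eq, oddMotzkin_eq, g,
    ← Finset.sum_filter_add_sum_filter_not (motz n) (fun w => Even (w.count MStep.U))]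
  rw [Finset.sum_congr rfl (fun w hw => (Finset.mem_filter.1 hw).2.neg_one_pow),
    Finset.sum_congr rfl
      (fun w hw => (Nat.not_even_iff_odd.1 (Finset.mem_filter.1 hw).2).neg_one_pow :
        ∀ w ∈ (motz n).filter (fun w => ¬ Even (w.count MStep.U)),
          (-1 : ℤ) ^ (w.count MStep.U) = -1)]
  simp only [Finset.sum_const, nsmul_eq_mul, mul_one, mul_neg, Nat.not_even_iff_odd]
  ring

lemma prefix_append_cases {r a b : List MStep} (h : r <+: a ++ b) :
    r <+: a ∨ ∃ s, s <+: b ∧ r = a ++ s := by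
  rcases le_or_gt r.length a.length with hle | hlt
  · exact Or.inl (List.prefix_of_prefix_length_le h (a.prefix_append b) hle)
  · right
    refine ⟨b.take (r.length - a.length), List.take_prefix _ _, ?_⟩
    calc r = (a ++ b).take r.length := List.prefix_iff_eq_take.1 h
      _ = a ++ b.take (r.length - a.length) := by
        rw [List.take_append, List.take_of_length_le (le_of_lt hlt)]

lemma motz_H {t : List MStep} : IsMotzkin (MStep.H :: t) ↔ IsMotzkin t := by
  constructor
  · rintro ⟨h1, h2⟩
    refine ⟨by simpa using h1, fun p hp => ?_⟩
    have := h2 (MStep.H :: p) (List.cons_prefix_cons.2 ⟨rfl, hp⟩)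
    simpa using this
  · rintro ⟨h1, h2⟩
    refine ⟨by simpa using h1, fun p hp => ?_⟩
    cases p with
    | nil => simp
    | cons a q =>
      obtain ⟨rfl, hq⟩ := List.cons_prefix_cons.1 hp
      simpa using h2 q hq

lemma motz_UD {w₁ w₂ : List MStep} (h1 : IsMotzkin w₁) (h2 : IsMotzkin w₂) :
    IsMotzkin (MStep.U :: (w₁ ++ MStep.D :: w₂)) := by
  obtain ⟨h1c, h1p⟩ := h1
  obtain ⟨h2c, h2p⟩ := h2
  constructor
  · simp [List.count_append]; omega
  · intro p hp
    cases p with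
    | nil => simp
    | cons a r =>
      obtain ⟨rfl, hr⟩ := List.cons_prefix_cons.1 hp
      rcases prefix_append_cases hr with hr1 | ⟨s, hs, rfl⟩
      · have := h1p r hr1
        simp; omega
      · cases s with
        | nil =>
          have := h1p w₁ List.prefix_rfl
          simp [List.count_append]; omega
        | cons c q =>
          obtain ⟨rfl, hq⟩ := List.cons_prefix_cons.1 hs
          have := h2p q hq
          simp [List.count_append]; omega

lemma motz_right {w₁ w₂ : List MStep}
    (h : IsMotzkin (MStep.U :: (w₁ ++ MStep.D :: w₂))) (h1 : IsMotzkin w₁) :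
    IsMotzkin w₂ := by
  obtain ⟨hc, hp⟩ := h
  simp [List.count_append] at hc
  constructor
  · have := h1.1; omega
  · intro p hpfx
    obtain ⟨s, rfl⟩ := hpfx
    have := hp (MStep.U :: (w₁ ++ MStep.D :: p))
      ⟨s, by simp [List.append_assoc]⟩
    simp [List.count_append] at this
    have := h1.1
    omega

lemma motz_unique_aux {a a' b b' : List MStep} (h1 : IsMotzkin a) (h1' : IsMotzkin a')
    (he : a ++ MStep.D :: b = a' ++ MStep.D :: b') (hlt : a.length < a'.length) : False := by
  have hpre : a ++ [MStep.D] <+: a' ++ MStep.D :: b' := by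
    rw [← he]; exact ⟨b, by simp⟩
  have hpa : a ++ [MStep.D] <+: a' :=
    List.prefix_of_prefix_length_le hpre (a'.prefix_append _) (by simp; omega)
  have := h1'.2 _ hpa
  have := h1.1
  simp [List.count_append] at *
  omega

lemma motz_unique {a a' b b' : List MStep} (h1 : IsMotzkin a) (h1' : IsMotzkin a')
    (he : a ++ MStep.D :: b = a' ++ MStep.D :: b') : a = a' ∧ b = b' := by
  rcases lt_trichotomy a.length a'.length with hlt | heq | hgt
  · exact absurd (motz_unique_aux h1 h1' he hlt) (by simp)
  · have ha : a <+: a' ++ MStep.D :: b' := by rw [← he]; exact ⟨MStep.D :: b, rfl⟩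
    have : a <+: a' :=
      List.prefix_of_prefix_length_le ha (a'.prefix_append _) (le_of_eq heq)
    have haa : a = a' := List.IsPrefix.eq_of_length this heq
    subst haa
    have hb : b = b' := by
      have := List.append_cancel_left he
      injection this
    exact ⟨rfl, hb⟩
  · exact absurd (motz_unique_aux h1' h1 he.symm hgt) (by simp)

lemma motz_decomp {t : List MStep} (h : IsMotzkin (MStep.U :: t)) :
    ∃ w₁ w₂, IsMotzkin w₁ ∧ IsMotzkin w₂ ∧ t = w₁ ++ MStep.D :: w₂ := by
  have ht_count : t.count MStep.D = t.count MStep.U + 1 := by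
    have := h.1; simp at this; omega
  have hpre : ∀ p, p <+: t → p.count MStep.D ≤ p.count MStep.U + 1 := by
    intro p hp
    have := h.2 (MStep.U :: p) (List.cons_prefix_cons.2 ⟨rfl, hp⟩)
    simp at this; omega
  have hex : ∃ m, (t.take m).count MStep.D = (t.take m).count MStep.U + 1 :=
    ⟨t.length, by simpa [List.take_of_length_le (le_refl t.length)] using ht_count⟩
  have hm : (t.take (Nat.find hex)).count MStep.D = (t.take (Nat.find hex)).count MStep.U + 1 :=
    Nat.find_spec hex
  have hmin : ∀ k, k < Nat.find hex →
      ¬ ((t.take k).count MStep.D = (t.take k).count MStep.U + 1) :=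
    fun k hk => Nat.find_min hex hk
  have hm_le : Nat.find hex ≤ t.length := Nat.find_le (by
    simpa [List.take_of_length_le (le_refl t.length)] using ht_count)
  have hm_pos : Nat.find hex ≠ 0 := by
    intro h0
    rw [h0] at hm
    simp at hm
  obtain ⟨k, hmk⟩ : ∃ k, Nat.find hex = k + 1 := ⟨Nat.find hex - 1, by omega⟩
  rw [hmk] at hm hmin hm_le
  have hk : k < t.length := by omega
  have ht_take : t.take (k + 1) = t.take k ++ [t[k]] := by
    rw [List.take_succ, List.getElem?_eq_getElem hk]
    rfl
  have hkP : ¬ ((t.take k).count MStep.D = (t.take k).count MStep.U + 1) :=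
    hmin k (Nat.lt_succ_self k)
  have hkpre : (t.take k).count MStep.D ≤ (t.take k).count MStep.U + 1 :=
    hpre _ (List.take_prefix _ _)
  have hx : t[k] = MStep.D := by
    rcases h' : t[k] with _ | _ | _
    · rw [ht_take, h'] at hm
      simp [List.count_append] at hm
      omega
    · rfl
    · rw [ht_take, h'] at hm
      simp [List.count_append] at hm
      omega
  have hbal : (t.take k).count MStep.D = (t.take k).count MStep.U := by
    rw [ht_take, hx] at hm
    simp [List.count_append] at hm
    omega
  refine ⟨t.take k, t.drop (k + 1), ⟨hbal.symm, ?_⟩, ?_, ?_⟩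
  · intro p hp
    have hpt : p <+: t := hp.trans (List.take_prefix _ _)
    have hlen : p.length ≤ k := by
      have := hp.length_le
      simp at this
      omega
    have hne := hmin p.length (by omega)
    rw [← List.prefix_iff_eq_take.1 hpt] at hne
    have := hpre p hpt
    omega
  · refine motz_right (w₁ := t.take k) ?_ ⟨hbal.symm, ?_⟩
    · have : t = t.take k ++ MStep.D :: t.drop (k + 1) := by
        conv_lhs => rw [← List.take_append_drop (k + 1) t]
        rw [ht_take, hx, List.append_assoc]
        rfl
      rw [← this]
      exact h
    · intro p hp
      have hpt : p <+: t := hp.trans (List.take_prefix _ _)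
      have hlen : p.length ≤ k := by
        have := hp.length_le
        simp at this
        omega
      have hne := hmin p.length (by omega)
      rw [← List.prefix_iff_eq_take.1 hpt] at hne
      have := hpre p hpt
      omega
  · conv_lhs => rw [← List.take_append_drop (k + 1) t]
    rw [ht_take, hx, List.append_assoc]
    rfl

lemma isMotzkin_nil : IsMotzkin [] :=
  ⟨rfl, fun p hp => by simp [List.prefix_nil.1 hp]⟩

lemma motz_zero : motz 0 = {[]} := by
  ext w
  simp only [mem_motz, Finset.mem_singleton, List.length_eq_zero_iff]
  constructor
  · rintro ⟨rfl, -⟩; rfl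
  · rintro rfl; exact ⟨rfl, isMotzkin_nil⟩

lemma g_zero : g 0 = 1 := by
  rw [g, motz_zero]
  simp

lemma g_one : g 1 = 1 := by decide

lemma motz_succ_succ (n : ℕ) :
    motz (n + 2) =
      ((motz (n + 1)).image (fun t => MStep.H :: t)) ∪
      (((Finset.HasAntidiagonal.antidiagonal n).sigma fun ij => motz ij.1 ×ˢ motz ij.2).image
        fun x => MStep.U :: (x.2.1 ++ MStep.D :: x.2.2)) := by
  ext w
  simp only [Finset.mem_union, Finset.mem_image, Finset.mem_sigma, Finset.mem_product,
    Finset.HasAntidiagonal.mem_antidiagonal, mem_motz]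
  constructor
  · rintro ⟨hlen, hmw⟩
    cases w with
    | nil => simp at hlen
    | cons c t =>
      cases c with
      | D =>
        have := hmw.2 [MStep.D] ⟨t, rfl⟩
        simp at this
      | H =>
        exact Or.inl ⟨t, ⟨by simpa using hlen, motz_H.1 hmw⟩, rfl⟩
      | U =>
        obtain ⟨w₁, w₂, h1, h2, rfl⟩ := motz_decomp hmw
        refine Or.inr ⟨⟨(w₁.length, w₂.length), (w₁, w₂)⟩, ⟨?_, ⟨rfl, h1⟩, ⟨rfl, h2⟩⟩, rfl⟩
        show w₁.length + w₂.length = n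
        simp only [List.length_cons, List.length_append] at hlen
        omega
  · rintro (⟨t, ⟨hlen, hm⟩, rfl⟩ | ⟨⟨⟨i, j⟩, w₁, w₂⟩, ⟨hij, ⟨hl1, hm1⟩, ⟨hl2, hm2⟩⟩, rfl⟩)
    · exact ⟨by simp [hlen], motz_H.2 hm⟩
    · dsimp only at hij hl1 hl2
      refine ⟨?_, motz_UD hm1 hm2⟩
      show (MStep.U :: (w₁ ++ MStep.D :: w₂)).length = n + 2
      simp only [List.length_cons, List.length_append]
      omega

lemma g_rec (n : ℕ) :
    g (n + 2) = g (n + 1) - ∑ ij ∈ Finset.HasAntidiagonal.antidiagonal n, g ij.1 * g ij.2 := by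
  have hdisj : Disjoint ((motz (n + 1)).image (fun t => MStep.H :: t))
      (((Finset.HasAntidiagonal.antidiagonal n).sigma fun ij => motz ij.1 ×ˢ motz ij.2).image
        fun x => MStep.U :: (x.2.1 ++ MStep.D :: x.2.2)) := by
    rw [Finset.disjoint_left]
    rintro w hw1 hw2
    simp only [Finset.mem_image] at hw1 hw2
    obtain ⟨t, -, rfl⟩ := hw1
    obtain ⟨x, -, hx⟩ := hw2
    simp at hx
  rw [g, motz_succ_succ, Finset.sum_union hdisj]
  have h1 : ∑ w ∈ (motz (n + 1)).image (fun t => MStep.H :: t),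
      (-1 : ℤ) ^ (w.count MStep.U) = g (n + 1) := by
    rw [Finset.sum_image (by intro x _ y _ h; rw [List.cons.injEq] at h; exact h.2)]
    simp [g]
  have h2 : ∑ w ∈ ((Finset.HasAntidiagonal.antidiagonal n).sigma fun ij => motz ij.1 ×ˢ motz ij.2).image
        (fun x => MStep.U :: (x.2.1 ++ MStep.D :: x.2.2)),
      (-1 : ℤ) ^ (w.count MStep.U)
      = - ∑ ij ∈ Finset.HasAntidiagonal.antidiagonal n, g ij.1 * g ij.2 := by
    rw [Finset.sum_image ?inj]
    case inj =>
      rintro ⟨⟨i, j⟩, a, b⟩ hx ⟨⟨i', j'⟩, a', b'⟩ hy h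
      simp only [Finset.mem_coe, Finset.mem_sigma, Finset.mem_product, Finset.HasAntidiagonal.mem_antidiagonal,
        mem_motz] at hx hy
      injection h with _ h'
      obtain ⟨rfl, rfl⟩ := motz_unique hx.2.1.2 hy.2.1.2 h'
      have hi : i = i' := by rw [← hx.2.1.1, ← hy.2.1.1]
      have hj : j = j' := by rw [← hx.2.2.1, ← hy.2.2.1]
      subst hi; subst hj
      rfl
    rw [Finset.sum_sigma, ← Finset.sum_neg_distrib]
    refine Finset.sum_congr rfl fun ij _ => ?_
    rw [Finset.sum_product]
    calc ∑ a ∈ motz ij.1, ∑ b ∈ motz ij.2,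
          (-1 : ℤ) ^ ((MStep.U :: (a ++ MStep.D :: b)).count MStep.U)
        = ∑ a ∈ motz ij.1, ∑ b ∈ motz ij.2,
            -((-1 : ℤ) ^ (a.count MStep.U) * (-1 : ℤ) ^ (b.count MStep.U)) := by
          refine Finset.sum_congr rfl fun a _ => Finset.sum_congr rfl fun b _ => ?_
          simp only [cU_cons_U, List.count_append, cD_cons_U, cU_cons_D, pow_succ, pow_add]
          ring
      _ = -(g ij.1 * g ij.2) := by
          simp only [Finset.sum_neg_distrib]
          rw [← Finset.sum_mul_sum]
          simp [g]
  rw [h1, h2]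
  ring

end MotzkinAux

open PowerSeries in
theorem stmt_12 :
    (PowerSeries.mk shadow : PowerSeries ℤ) =
      1 + X * PowerSeries.mk shadow - X ^ 2 * (PowerSeries.mk shadow) ^ 2 := by
  have hs : ∀ n, shadow n = MotzkinAux.g n := MotzkinAux.shadow_eq_g
  ext n
  rw [map_sub, map_add, PowerSeries.coeff_mk]
  match n with
  | 0 =>
    rw [hs, MotzkinAux.g_zero]
    simp [PowerSeries.coeff_X_pow_mul']
  | 1 =>
    rw [hs, MotzkinAux.g_one]
    rw [PowerSeries.coeff_succ_X_mul, PowerSeries.coeff_mk, hs, MotzkinAux.g_zero]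
    simp [PowerSeries.coeff_X_pow_mul', PowerSeries.coeff_one]
  | (k + 2 : ℕ) =>
    rw [PowerSeries.coeff_succ_X_mul, PowerSeries.coeff_mk]
    have hX2 : (PowerSeries.coeff (R := ℤ) (k + 2)) (X ^ 2 * (PowerSeries.mk shadow) ^ 2)
        = ∑ ij ∈ Finset.HasAntidiagonal.antidiagonal k, shadow ij.1 * shadow ij.2 := by
      rw [show k + 2 = k + 2 from rfl, PowerSeries.coeff_X_pow_mul, sq,
        PowerSeries.coeff_mul]
      simp [PowerSeries.coeff_mk]
    rw [hX2, PowerSeries.coeff_one, if_neg (by omega)]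
    have hsum : ∑ ij ∈ Finset.HasAntidiagonal.antidiagonal k, shadow ij.1 * shadow ij.2
        = ∑ ij ∈ Finset.HasAntidiagonal.antidiagonal k, MotzkinAux.g ij.1 * MotzkinAux.g ij.2 :=
      Finset.sum_congr rfl fun ij _ => by rw [hs, hs]
    rw [hsum, hs, hs, MotzkinAux.g_rec]
    ring
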